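/- Let Δ be a d-dimensional simplicial complex with d ≥ 1 whose number of (d-1)-faces f_{d-1} is at least its number of d-faces f_d. Let J = I_Δ + (x_1^{d+2},...,x_n^{d+2}) in R = K[x_1,...,x_n]. Then with t = C(d+2,2), the Hilbert function satisfies HF_{R/J}(t-1) ≥ HF_{R/J}(t). -/

import Mathlib

open MvPolynomial


/-- `Mf d s v` : number of functions from `Fin s` to `{0,…,d}` with sum `v` (0 for `v` outside). -/
def Mf (d : ℕ) : ℕ → ℤ → ℕ
  | 0, v => if v = 0 then 1 else 0
  | s+1, v => ∑ j ∈ Finset.range (d+1), Mf d s (v - j)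

lemma Mf_neg (d : ℕ) : ∀ (s : ℕ) (v : ℤ), v < 0 → Mf d s v = 0 := by
  intro s
  induction s with
  | zero => intro v hv; simp [Mf]; omega
  | succ s ih =>
    intro v hv
    simp only [Mf]
    apply Finset.sum_eq_zero
    intro j _
    exact ih _ (by omega)

lemma Mf_gt (d : ℕ) : ∀ (s : ℕ) (v : ℤ), (s : ℤ) * d < v → Mf d s v = 0 := by
  intro s
  induction s with
  | zero => intro v hv; simp at hv; simp [Mf]; omega
  | succ s ih =>
    intro v hv
    simp only [Mf]
    apply Finset.sum_eq_zero
    intro j hj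
    apply ih
    have : (j : ℤ) ≤ d := by exact_mod_cast Nat.lt_succ_iff.mp (Finset.mem_range.mp hj)
    push_cast at hv ⊢
    nlinarith

lemma Mf_symm (d : ℕ) : ∀ (s : ℕ) (v : ℤ), Mf d s v = Mf d s ((s : ℤ) * d - v) := by
  intro s
  induction s with
  | zero => intro v; simp [Mf]
  | succ s ih =>
    intro v
    simp only [Mf]
    rw [← Finset.sum_range_reflect]
    apply Finset.sum_congr rfl
    intro j hj
    have hj' : j < d + 1 := Finset.mem_range.mp hj
    rw [ih]
    congr 1
    have h1 : ((d + 1 - 1 - j : ℕ) : ℤ) = (d : ℤ) - j := by omega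
    rw [h1]; push_cast; ring

lemma Mf_anti (d : ℕ) : ∀ (s : ℕ) (x y : ℤ), x ≤ y → (s : ℤ) * d ≤ x + y →
    Mf d s y ≤ Mf d s x := by
  intro s
  induction s with
  | zero =>
    intro x y hxy hsum
    simp only [Mf]
    split_ifs <;> omega
  | succ s ih =>
    have dec : ∀ v : ℤ, ((s+1 : ℕ) : ℤ) * d ≤ 2*v + 1 →
        Mf d (s+1) (v+1) ≤ Mf d (s+1) v := by
      intro v hv
      have hA : Mf d (s+1) (v+1)
          = (∑ j ∈ Finset.range d, Mf d s (v - j)) + Mf d s (v+1) := by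
        show (∑ j ∈ Finset.range (d+1), Mf d s (v + 1 - j)) = _
        rw [Finset.sum_range_succ']
        congr 1
        · apply Finset.sum_congr rfl
          intro j _
          congr 1
          push_cast; ring
        · norm_num
      have hB : Mf d (s+1) v
          = (∑ j ∈ Finset.range d, Mf d s (v - j)) + Mf d s (v - d) := by
        show (∑ j ∈ Finset.range (d+1), Mf d s (v - j)) = _
        rw [Finset.sum_range_succ]
      rw [hA, hB]
      apply Nat.add_le_add_left
      apply ih (v - d) (v + 1) (by omega)
      push_cast at hv ⊢
      linarith
    have inc : ∀ v : ℤ, 2*(v+1) ≤ ((s+1 : ℕ) : ℤ) * d →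
        Mf d (s+1) v ≤ Mf d (s+1) (v+1) := by
      intro v hv
      rw [Mf_symm d (s+1) v, Mf_symm d (s+1) (v+1)]
      have h1 : ((s+1:ℕ):ℤ) * d - v = (((s+1:ℕ):ℤ) * d - (v+1)) + 1 := by ring
      rw [h1]
      apply dec
      linarith
    have decChain : ∀ (k : ℕ) (x : ℤ), ((s+1:ℕ):ℤ) * d ≤ 2*x →
        Mf d (s+1) (x + k) ≤ Mf d (s+1) x := by
      intro k
      induction k with
      | zero => intro x _; simp
      | succ k ihk =>
        intro x hx
        have h1 : x + ((k+1 : ℕ) : ℤ) = (x + k) + 1 := by push_cast; ring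
        rw [h1]
        calc Mf d (s+1) ((x + k) + 1) ≤ Mf d (s+1) (x + k) := by
              apply dec; have : (0:ℤ) ≤ k := Int.natCast_nonneg k; linarith
          _ ≤ Mf d (s+1) x := ihk x hx
    have incChain : ∀ (k : ℕ) (x : ℤ), 2*(x + k) ≤ ((s+1:ℕ):ℤ) * d →
        Mf d (s+1) x ≤ Mf d (s+1) (x + k) := by
      intro k
      induction k with
      | zero => intro x _; simp
      | succ k ihk =>
        intro x hx
        have h1 : x + ((k+1 : ℕ) : ℤ) = (x + k) + 1 := by push_cast; ring
        rw [h1]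
        calc Mf d (s+1) x ≤ Mf d (s+1) (x + k) := by
              apply ihk; push_cast at hx ⊢; linarith
          _ ≤ Mf d (s+1) ((x + k) + 1) := by
              apply inc; push_cast at hx ⊢; linarith
    intro x y hxy hsum
    by_cases h : ((s+1:ℕ):ℤ) * d ≤ 2*x
    · have h1 : y = x + ((y - x).toNat : ℤ) := by omega
      rw [h1]
      exact decChain _ x h
    · rw [Mf_symm d (s+1) y]
      have h2 : x = (((s+1:ℕ):ℤ) * d - y) + ((x - (((s+1:ℕ):ℤ) * d - y)).toNat : ℤ) := by
        omega
      calc Mf d (s+1) (((s+1:ℕ):ℤ) * d - y)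
          ≤ Mf d (s+1) ((((s+1:ℕ):ℤ) * d - y) + ((x - (((s+1:ℕ):ℤ) * d - y)).toNat : ℤ)) := by
            apply incChain; omega
        _ = Mf d (s+1) x := by rw [← h2]

lemma Mf_expand (d : ℕ) (m : ℤ) :
    Mf d (d+1) m = (∑ j ∈ Finset.range d, Mf d d (m - 1 - j)) + Mf d d m := by
  show (∑ j ∈ Finset.range (d+1), Mf d d (m - j)) = _
  rw [Finset.sum_range_succ']
  congr 1
  · apply Finset.sum_congr rfl
    intro j _
    congr 1
    push_cast; ring
  · norm_num

lemma Mf_key (d : ℕ) (m : ℤ) (hm : 2*m = (d:ℤ)*(d+1)) :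
    Mf d (d+1) m + Mf d d (m+1) = Mf d (d+1) (m-1) + Mf d d m := by
  have h1 := Mf_expand d m
  have h2 : Mf d (d+1) (m-1)
      = (∑ j ∈ Finset.range d, Mf d d (m - 1 - j)) + Mf d d (m - 1 - d) := by
    show (∑ j ∈ Finset.range (d+1), Mf d d (m - 1 - j)) = _
    rw [Finset.sum_range_succ]
  have h3 : Mf d d (m+1) = Mf d d (m - 1 - d) := by
    rw [Mf_symm d d (m+1)]
    congr 1
    linarith
  omega

lemma Mf_top_mono (d : ℕ) (m : ℤ) (hm : 2*m = (d:ℤ)*(d+1)) :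
    Mf d (d+1) (m-1) ≤ Mf d (d+1) m := by
  have h1 : Mf d (d+1) (m-1) = Mf d (d+1) (m+1) := by
    rw [Mf_symm d d.succ (m-1)]
    congr 1
    push_cast
    linarith
  rw [h1]
  apply Mf_anti d (d+1) m (m+1) (by omega)
  push_cast
  linarith

lemma count_ineq (n d t : ℕ) (Δ : Finset (Finset (Fin n)))
    (h2t : 2 * (t : ℤ) = ((d:ℤ)+1)*((d:ℤ)+2))
    (hdim : ∀ σ ∈ Δ, σ.card ≤ d + 1)
    (hf : (Δ.filter fun σ => σ.card = d + 1).card ≤ (Δ.filter fun σ => σ.card = d).card) :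
    ∑ σ ∈ Δ, Mf d σ.card ((t:ℤ) - σ.card) ≤ ∑ σ ∈ Δ, Mf d σ.card ((t:ℤ) - 1 - σ.card) := by
  classical
  set m : ℤ := (t:ℤ) - (d+1) with hm_def
  have hm : 2*m = (d:ℤ)*(d+1) := by rw [hm_def]; ring_nf; linarith
  set A : Finset (Fin n) → ℕ := fun σ => Mf d σ.card ((t:ℤ) - σ.card) with hA
  set B : Finset (Fin n) → ℕ := fun σ => Mf d σ.card ((t:ℤ) - 1 - σ.card) with hB
  set p : Finset (Fin n) → Prop := fun σ => σ.card = d + 1 with hp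
  set q : Finset (Fin n) → Prop := fun σ => σ.card = d with hq
  -- split sums
  rw [← Finset.sum_filter_add_sum_filter_not Δ p A,
      ← Finset.sum_filter_add_sum_filter_not Δ p B,
      ← Finset.sum_filter_add_sum_filter_not (Δ.filter fun σ => ¬ p σ) q A,
      ← Finset.sum_filter_add_sum_filter_not (Δ.filter fun σ => ¬ p σ) q B]
  -- constant values on the filters
  have hcast : ((d+1 : ℕ) : ℤ) = (d:ℤ)+1 := by push_cast; ring
  have sumA1 : ∑ σ ∈ Δ.filter p, A σ = (Δ.filter p).card * Mf d (d+1) m := by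
    rw [Finset.sum_congr rfl (fun σ hσ => ?_), Finset.sum_const, smul_eq_mul]
    have h := (Finset.mem_filter.mp hσ).2
    show A σ = _
    rw [hA]
    simp only []
    rw [h, hcast, hm_def]
  have sumB1 : ∑ σ ∈ Δ.filter p, B σ = (Δ.filter p).card * Mf d (d+1) (m-1) := by
    rw [Finset.sum_congr rfl (fun σ hσ => ?_), Finset.sum_const, smul_eq_mul]
    have h := (Finset.mem_filter.mp hσ).2
    show B σ = _
    rw [hB]
    simp only []
    rw [h, hcast]
    congr 1
    rw [hm_def]; ring
  have sumA2 : ∑ σ ∈ (Δ.filter fun σ => ¬ p σ).filter q, A σ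
      = ((Δ.filter fun σ => ¬ p σ).filter q).card * Mf d d (m+1) := by
    rw [Finset.sum_congr rfl (fun σ hσ => ?_), Finset.sum_const, smul_eq_mul]
    have h := (Finset.mem_filter.mp hσ).2
    show A σ = _
    rw [hA]
    simp only []
    rw [h]
    congr 1
    rw [hm_def]; push_cast; ring
  have sumB2 : ∑ σ ∈ (Δ.filter fun σ => ¬ p σ).filter q, B σ
      = ((Δ.filter fun σ => ¬ p σ).filter q).card * Mf d d m := by
    rw [Finset.sum_congr rfl (fun σ hσ => ?_), Finset.sum_const, smul_eq_mul]
    have h := (Finset.mem_filter.mp hσ).2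
    show B σ = _
    rw [hB]
    simp only []
    rw [h]
    congr 1
    rw [hm_def]; push_cast; ring
  -- the remaining faces: termwise inequality
  have sum3 : ∑ σ ∈ (Δ.filter fun σ => ¬ p σ).filter (fun σ => ¬ q σ), A σ
      ≤ ∑ σ ∈ (Δ.filter fun σ => ¬ p σ).filter (fun σ => ¬ q σ), B σ := by
    apply Finset.sum_le_sum
    intro σ hσ
    have h1 := Finset.mem_filter.mp hσ
    have h2 := Finset.mem_filter.mp h1.1
    have hle : σ.card ≤ d + 1 := hdim σ h2.1
    have hs : σ.card ≤ d := by
      have := h2.2; have := h1.2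
      simp only [hp, hq] at *
      omega
    apply Mf_anti d σ.card ((t:ℤ) - 1 - σ.card) ((t:ℤ) - σ.card) (by omega)
    have hsz : (σ.card : ℤ) ≤ (d:ℤ) := by exact_mod_cast hs
    nlinarith [hsz, h2t]
  -- card comparison
  have hcard : (Δ.filter p).card ≤ ((Δ.filter fun σ => ¬ p σ).filter q).card := by
    have : (Δ.filter fun σ => ¬ p σ).filter q = Δ.filter q := by
      rw [Finset.filter_filter]
      apply Finset.filter_congr
      intro σ _
      simp only [hp, hq]
      constructor
      · rintro ⟨_, h⟩; exact h
      · intro h; exact ⟨by omega, h⟩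
    rw [this]
    exact hf
  -- final arithmetic
  set c1 := (Δ.filter p).card
  set c2 := ((Δ.filter fun σ => ¬ p σ).filter q).card
  set P := Mf d (d+1) m
  set P' := Mf d (d+1) (m-1)
  set Q := Mf d d (m+1)
  set Q' := Mf d d m
  have hkey : P + Q = P' + Q' := Mf_key d m hm
  have hPP : P' ≤ P := Mf_top_mono d m hm
  rw [sumA1, sumB1, sumA2, sumB2]
  have he1 : P = P' + (P - P') := by omega
  have he2 : Q' = Q + (P - P') := by omega
  have he3 : c1 * (P - P') ≤ c2 * (P - P') := Nat.mul_le_mul_right _ hcard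
  rw [he1, he2]
  rw [Nat.mul_add, Nat.mul_add]
  omega


lemma Mf_zero (d : ℕ) (v : ℤ) : Mf d 0 v = if v = 0 then 1 else 0 := rfl

lemma Mf_succ (d s : ℕ) (v : ℤ) : Mf d (s+1) v = ∑ j ∈ Finset.range (d+1), Mf d s (v - j) := rfl


/-- The Stanley–Reisner ideal of a simplicial complex `Δ` on vertex set `Fin n`:
the ideal generated by the squarefree monomials `∏_{j ∈ τ} x_j` for non-faces `τ`. -/
noncomputable def SRIdeal (K : Type*) [Field K] (n : ℕ) (Δ : Finset (Finset (Fin n))) :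
    Ideal (MvPolynomial (Fin n) K) :=
  Ideal.span {p | ∃ τ : Finset (Fin n), τ ∉ Δ ∧ p = ∏ j ∈ τ, X j}

/-- The Hilbert function of `R/J` in degree `t`: the dimension of the image of the
space of homogeneous polynomials of degree `t` in the quotient `R/J`. -/
noncomputable def HF (K : Type*) [Field K] {n : ℕ} (J : Ideal (MvPolynomial (Fin n) K))
    (t : ℕ) : ℕ :=
  Module.finrank K (Submodule.map (Ideal.Quotient.mkₐ K J).toLinearMap
    (homogeneousSubmodule (Fin n) K t))

/-- monomials with support exactly `σ`, exponents `≤ d+1`, total degree `u`. -/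
noncomputable def stdF (n d : ℕ) (σ : Finset (Fin n)) (u : ℕ) : Finset (Fin n →₀ ℕ) :=
  (Finset.finsuppAntidiag σ u).filter
    (fun m => m.support = σ ∧ ∀ i, m i ≤ d+1)

lemma mem_stdF {n d : ℕ} {σ : Finset (Fin n)} {u : ℕ} {m : Fin n →₀ ℕ} :
    m ∈ stdF n d σ u ↔ m.support = σ ∧ (∀ i, m i ≤ d+1) ∧ m.sum (fun _ e => e) = u := by
  unfold stdF
  rw [Finset.mem_filter, Finset.mem_finsuppAntidiag']
  constructor
  · rintro ⟨⟨h1, h2⟩, h3, h4⟩; exact ⟨h3, h4, h1⟩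
  · rintro ⟨h1, h2, h3⟩; exact ⟨⟨h3, h1.le⟩, h1, h2⟩

lemma card_stdF (n d : ℕ) (σ : Finset (Fin n)) :
    ∀ u : ℕ, (stdF n d σ u).card = Mf d σ.card ((u:ℤ) - σ.card) := by
  classical
  induction σ using Finset.induction_on with
  | empty =>
    intro u
    rw [Finset.card_empty, Mf_zero]
    simp only [Nat.cast_zero, sub_zero]
    rcases Nat.eq_zero_or_pos u with hu | hu
    · subst hu
      have : stdF n d ∅ 0 = {0} := by
        ext m
        rw [mem_stdF, Finset.mem_singleton]
        constructor
        · rintro ⟨h1, _, _⟩; exact Finsupp.support_eq_empty.mp h1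
        · rintro rfl; simp
      rw [this]
      simp
    · have : stdF n d ∅ u = ∅ := by
        apply Finset.eq_empty_of_forall_notMem
        intro m hm
        rw [mem_stdF] at hm
        obtain ⟨h1, _, h3⟩ := hm
        have : m = 0 := Finsupp.support_eq_empty.mp h1
        subst this
        simp at h3
        omega
      rw [this, Finset.card_empty, if_neg (by exact_mod_cast (by omega : u ≠ 0))]
  | @insert a σ ha ih =>
    intro u
    have hdecomp : stdF n d (insert a σ) u
        = (Finset.Icc 1 (min (d+1) u)).biUnion
          (fun j => (stdF n d σ (u - j)).image (fun m => m + Finsupp.single a j)) := by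
      ext m
      simp only [Finset.mem_biUnion, Finset.mem_Icc, Finset.mem_image, mem_stdF]
      constructor
      · rintro ⟨hsupp, hbd, hsum⟩
        have haa : a ∈ m.support := by rw [hsupp]; exact Finset.mem_insert_self a σ
        have hma : 1 ≤ m a := Nat.one_le_iff_ne_zero.mpr (Finsupp.mem_support_iff.mp haa)
        have hmau : m a ≤ u := by
          rw [← hsum]
          rw [Finsupp.sum]
          exact Finset.single_le_sum (fun i _ => Nat.zero_le _) haa
        refine ⟨m a, ⟨hma, le_min (hbd a) hmau⟩, m.erase a, ⟨?_, ?_, ?_⟩, ?_⟩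
        · rw [Finsupp.support_erase, hsupp, Finset.erase_insert ha]
        · intro i
          rcases eq_or_ne i a with rfl | hia
          · simp
          · rw [Finsupp.erase_ne hia]; exact hbd i
        · have hm' : Finsupp.single a (m a) + m.erase a = m := Finsupp.single_add_erase a m
          have := congrArg (fun f => Finsupp.sum f (fun _ e => e)) hm'
          rw [Finsupp.sum_add_index' (fun _ => rfl) (fun _ _ _ => rfl),
            Finsupp.sum_single_index rfl] at this
          omega
        · exact Finsupp.erase_add_single a m
      · rintro ⟨j, ⟨hj1, hj2⟩, m', ⟨hsupp, hbd, hsum⟩, rfl⟩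
        have hju : j ≤ u := (le_min_iff.mp hj2).2
        have hjd : j ≤ d + 1 := (le_min_iff.mp hj2).1
        have hm'a : m' a = 0 := by
          rw [← Finsupp.notMem_support_iff, hsupp]; exact ha
        refine ⟨?_, ?_, ?_⟩
        · rw [Finsupp.support_add_eq, hsupp,
            Finsupp.support_single_ne_zero a (by omega : j ≠ 0)]
          · exact (Finset.union_comm _ _).trans rfl |>.trans (Finset.insert_eq a σ).symm
          · rw [hsupp, Finsupp.support_single_ne_zero a (by omega : j ≠ 0)]
            simp [Finset.disjoint_singleton_right, ha]
        · intro i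
          rcases eq_or_ne i a with rfl | hia
          · simp [hm'a, hjd]
          · rw [Finsupp.add_apply, Finsupp.single_apply, if_neg (fun h => hia h.symm)]
            simpa using hbd i
        · rw [Finsupp.sum_add_index' (fun _ => rfl) (fun _ _ _ => rfl),
            Finsupp.sum_single_index rfl, hsum]
          omega
    have hdisj : ∀ j1 ∈ Finset.Icc 1 (min (d+1) u), ∀ j2 ∈ Finset.Icc 1 (min (d+1) u),
        j1 ≠ j2 → Disjoint ((stdF n d σ (u - j1)).image (fun m => m + Finsupp.single a j1))
          ((stdF n d σ (u - j2)).image (fun m => m + Finsupp.single a j2)) := by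
      intro j1 _ j2 _ hne
      rw [Finset.disjoint_left]
      rintro m hm1 hm2
      simp only [Finset.mem_image, mem_stdF] at hm1 hm2
      obtain ⟨m1, ⟨hs1, -, -⟩, rfl⟩ := hm1
      obtain ⟨m2, ⟨hs2, -, -⟩, heq⟩ := hm2
      apply hne
      have h1 : m1 a = 0 := by rw [← Finsupp.notMem_support_iff, hs1]; exact ha
      have h2 : m2 a = 0 := by rw [← Finsupp.notMem_support_iff, hs2]; exact ha
      have h3 := congrArg (fun f => f a) heq
      simp only [Finsupp.add_apply, Finsupp.single_eq_same, h1, h2] at h3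
      omega
    calc (stdF n d (insert a σ) u).card
        = ∑ j ∈ Finset.Icc 1 (min (d+1) u),
            ((stdF n d σ (u - j)).image (fun m => m + Finsupp.single a j)).card := by
          rw [hdecomp]; exact Finset.card_biUnion hdisj
      _ = ∑ j ∈ Finset.Icc 1 (min (d+1) u), Mf d σ.card ((u:ℤ) - j - σ.card) := by
          apply Finset.sum_congr rfl
          intro j hj
          rw [Finset.card_image_of_injective _ (add_left_injective _), ih]
          congr 1
          have hju : j ≤ min (d+1) u := (Finset.mem_Icc.mp hj).2
          have : j ≤ u := le_trans hju (min_le_right _ _)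
          omega
      _ = ∑ j ∈ Finset.Icc 1 (d+1), Mf d σ.card ((u:ℤ) - j - σ.card) := by
          apply Finset.sum_subset
          · exact Finset.Icc_subset_Icc_right (min_le_left _ _)
          · intro j hj hj'
            apply Mf_neg
            rw [Finset.mem_Icc] at hj
            rw [Finset.mem_Icc] at hj'
            have h4 : u < j := by omega
            have h5 : (0:ℤ) ≤ (σ.card : ℤ) := Int.natCast_nonneg _
            omega
      _ = ∑ j' ∈ Finset.range (d+1), Mf d σ.card ((u:ℤ) - (j'+1) - σ.card) := by
          apply Finset.sum_nbij' (fun j => j - 1) (fun j' => j' + 1)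
          · intro j hj; rw [Finset.mem_Icc] at hj; rw [Finset.mem_range]; omega
          · intro j' hj'; rw [Finset.mem_range] at hj'; rw [Finset.mem_Icc]; omega
          · intro j hj; rw [Finset.mem_Icc] at hj; omega
          · intro j' _; omega
          · intro j hj
            rw [Finset.mem_Icc] at hj
            congr 1
            have : ((j - 1 : ℕ) : ℤ) = (j:ℤ) - 1 := by omega
            rw [this]; ring
      _ = Mf d (insert a σ).card ((u:ℤ) - (insert a σ).card) := by
          rw [Finset.card_insert_of_notMem ha, Mf_succ]
          apply Finset.sum_congr rfl
          intro j' _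
          congr 1
          push_cast
          ring

noncomputable def stdMon (n d : ℕ) (Δ : Finset (Finset (Fin n))) (u : ℕ) :
    Finset (Fin n →₀ ℕ) :=
  Δ.biUnion (fun σ => stdF n d σ u)

lemma mem_stdMon {n d : ℕ} {Δ : Finset (Finset (Fin n))} {u : ℕ} {m : Fin n →₀ ℕ} :
    m ∈ stdMon n d Δ u ↔ m.support ∈ Δ ∧ (∀ i, m i ≤ d+1) ∧ m.sum (fun _ e => e) = u := by
  unfold stdMon
  rw [Finset.mem_biUnion]
  constructor
  · rintro ⟨σ, hσ, hm⟩
    rw [mem_stdF] at hm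
    exact ⟨hm.1 ▸ hσ, hm.2⟩
  · rintro ⟨h1, h2, h3⟩
    exact ⟨m.support, h1, mem_stdF.mpr ⟨rfl, h2, h3⟩⟩

lemma card_stdMon {n d : ℕ} {Δ : Finset (Finset (Fin n))} {u : ℕ} :
    (stdMon n d Δ u).card = ∑ σ ∈ Δ, (stdF n d σ u).card := by
  apply Finset.card_biUnion
  intro σ1 _ σ2 _ hne
  rw [Function.onFun, Finset.disjoint_left]
  intro m hm1 hm2
  rw [mem_stdF] at hm1 hm2
  exact hne (hm1.1 ▸ hm2.1)

def Sset (n d : ℕ) (Δ : Finset (Finset (Fin n))) : Set (Fin n →₀ ℕ) :=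
  {s | ∃ τ : Finset (Fin n), τ ∉ Δ ∧ s = ∑ j ∈ τ, Finsupp.single j 1} ∪
    Set.range (fun i : Fin n => Finsupp.single i (d+2))

lemma prod_X_eq_monomial {K : Type*} [Field K] {n : ℕ} (τ : Finset (Fin n)) :
    (∏ j ∈ τ, (X j : MvPolynomial (Fin n) K))
      = monomial (∑ j ∈ τ, Finsupp.single j 1) 1 := by
  classical
  induction τ using Finset.induction_on with
  | empty => simp [monomial_zero']
  | @insert a τ ha ih =>
    rw [Finset.prod_insert ha, Finset.sum_insert ha, ih, ← pow_one (X a : MvPolynomial (Fin n) K),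
      X_pow_eq_monomial, monomial_mul, one_mul]

lemma J_eq {K : Type*} [Field K] {n d : ℕ} (Δ : Finset (Finset (Fin n))) :
    SRIdeal K n Δ ⊔
        Ideal.span (Set.range fun i : Fin n => (X i : MvPolynomial (Fin n) K) ^ (d + 2))
      = Ideal.span ((fun s => monomial s (1:K)) '' Sset n d Δ) := by
  rw [SRIdeal, ← Ideal.span_union]
  congr 1
  rw [Sset, Set.image_union]
  congr 1
  · ext p
    simp only [Set.mem_setOf_eq, Set.mem_image]
    constructor
    · rintro ⟨τ, hτ, rfl⟩
      exact ⟨_, ⟨τ, hτ, rfl⟩, (prod_X_eq_monomial τ).symm⟩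
    · rintro ⟨s, ⟨τ, hτ, rfl⟩, rfl⟩
      exact ⟨τ, hτ, (prod_X_eq_monomial τ).symm⟩
  · ext p
    simp only [Set.mem_range, Set.mem_image, X_pow_eq_monomial]
    constructor
    · rintro ⟨i, rfl⟩; exact ⟨_, ⟨i, rfl⟩, rfl⟩
    · rintro ⟨s, ⟨i, rfl⟩, rfl⟩; exact ⟨i, rfl⟩

lemma indicator_apply {n : ℕ} (τ : Finset (Fin n)) (i : Fin n) :
    (∑ j ∈ τ, Finsupp.single j (1:ℕ)) i = if i ∈ τ then 1 else 0 := by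
  classical
  rw [Finset.sum_apply']
  simp [Finsupp.single_apply]

lemma div_iff {n d : ℕ} {Δ : Finset (Finset (Fin n))}
    (hdown : ∀ σ ∈ Δ, ∀ τ ⊆ σ, τ ∈ Δ) (m : Fin n →₀ ℕ) :
    (∃ s ∈ Sset n d Δ, s ≤ m) ↔ ¬(m.support ∈ Δ ∧ ∀ i, m i ≤ d+1) := by
  classical
  constructor
  · rintro ⟨s, hs, hsm⟩ ⟨hΔ, hbd⟩
    rcases hs with ⟨τ, hτ, rfl⟩ | ⟨i, rfl⟩
    · apply hτ
      apply hdown _ hΔ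
      intro j hj
      rw [Finsupp.mem_support_iff]
      have := (Finsupp.le_def.mp hsm) j
      rw [indicator_apply, if_pos hj] at this
      omega
    · have := (Finsupp.le_def.mp hsm) i
      rw [Finsupp.single_eq_same] at this
      have := hbd i
      omega
  · intro h
    rcases not_and_or.mp h with h1 | h2
    · refine ⟨∑ j ∈ m.support, Finsupp.single j 1, Or.inl ⟨m.support, h1, rfl⟩, ?_⟩
      rw [Finsupp.le_def]
      intro i
      rw [indicator_apply]
      split_ifs with hi
      · exact Nat.one_le_iff_ne_zero.mpr (Finsupp.mem_support_iff.mp hi)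
      · exact Nat.zero_le _
    · push_neg at h2
      obtain ⟨i, hi⟩ := h2
      refine ⟨Finsupp.single i (d+2), Or.inr ⟨i, rfl⟩, ?_⟩
      rw [Finsupp.le_def]
      intro j
      rcases eq_or_ne j i with rfl | hj
      · rw [Finsupp.single_eq_same]; omega
      · rw [Finsupp.single_eq_of_ne' (fun h => hj h.symm)]; exact Nat.zero_le _

lemma HF_card (K : Type*) [Field K] {n d : ℕ} {Δ : Finset (Finset (Fin n))}
    (hdown : ∀ σ ∈ Δ, ∀ τ ⊆ σ, τ ∈ Δ) (u : ℕ) :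
    HF K (Ideal.span ((fun s => monomial s (1:K)) '' Sset n d Δ)) u
      = (stdMon n d Δ u).card := by
  classical
  set J := Ideal.span ((fun s => monomial s (1:K)) '' Sset n d Δ) with hJ
  set v : ↥(stdMon n d Δ u) → (MvPolynomial (Fin n) K ⧸ J) :=
    fun i => Ideal.Quotient.mkₐ K J (monomial (i : Fin n →₀ ℕ) 1) with hv
  have hli : LinearIndependent K v := by
    rw [Fintype.linearIndependent_iff]
    intro g hg i₀
    by_contra hne
    set p : MvPolynomial (Fin n) K :=
      ∑ i : ↥(stdMon n d Δ u), monomial (i : Fin n →₀ ℕ) (g i) with hp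
    have hmk : Ideal.Quotient.mkₐ K J p = 0 := by
      rw [hp, map_sum, ← hg]
      apply Finset.sum_congr rfl
      intro i _
      rw [hv]
      rw [← map_smul]
      congr 1
      rw [smul_monomial, smul_eq_mul, mul_one]
    have hpJ : p ∈ J := by
      rwa [Ideal.Quotient.mkₐ_eq_mk, Ideal.Quotient.eq_zero_iff_mem] at hmk
    have hcoeff : coeff (i₀ : Fin n →₀ ℕ) p = g i₀ := by
      rw [hp, coeff_sum]
      rw [Finset.sum_eq_single i₀]
      · rw [coeff_monomial, if_pos rfl]
      · intro j _ hji
        rw [coeff_monomial, if_neg]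
        intro h
        exact hji (Subtype.ext h)
      · intro h
        exact absurd (Finset.mem_univ i₀) h
    have hsupp : (i₀ : Fin n →₀ ℕ) ∈ p.support := by
      rw [mem_support_iff, hcoeff]
      exact hne
    rw [hJ, mem_ideal_span_monomial_image] at hpJ
    obtain ⟨s, hs, hsle⟩ := hpJ _ hsupp
    have hstd := mem_stdMon.mp i₀.2
    exact (div_iff hdown _).mp ⟨s, hs, hsle⟩ ⟨hstd.1, hstd.2.1⟩
  have hspan : Submodule.map (Ideal.Quotient.mkₐ K J).toLinearMap
      (homogeneousSubmodule (Fin n) K u) = Submodule.span K (Set.range v) := by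
    apply le_antisymm
    · rintro _ ⟨p, hp, rfl⟩
      rw [SetLike.mem_coe, mem_homogeneousSubmodule] at hp
      show (Ideal.Quotient.mkₐ K J) p ∈ _
      have hrepr := congrArg (Ideal.Quotient.mkₐ K J) p.as_sum
      rw [map_sum] at hrepr
      rw [hrepr]
      apply Submodule.sum_mem
      intro m hm
      have hdeg : m.sum (fun _ e => e) = u := by
        by_contra hne
        exact (mem_support_iff.mp hm) (hp.coeff_eq_zero hne)
      have hsm : monomial m (coeff m p) = (coeff m p) • monomial m (1:K) := by
        rw [smul_monomial, smul_eq_mul, mul_one]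
      rw [hsm, map_smul]
      apply Submodule.smul_mem
      by_cases hstd : m ∈ stdMon n d Δ u
      · exact Submodule.subset_span ⟨⟨m, hstd⟩, rfl⟩
      · have hdiv : ∃ s ∈ Sset n d Δ, s ≤ m := by
          apply (div_iff hdown m).mpr
          intro hcon
          exact hstd (mem_stdMon.mpr ⟨hcon.1, hcon.2, hdeg⟩)
        have hmem : monomial m (1:K) ∈ J := by
          rw [hJ, mem_ideal_span_monomial_image]
          intro xi hxi
          rw [support_monomial, if_neg (one_ne_zero)] at hxi
          rw [Finset.mem_singleton] at hxi
          subst hxi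
          exact hdiv
        have : Ideal.Quotient.mkₐ K J (monomial m (1:K)) = 0 := by
          rw [Ideal.Quotient.mkₐ_eq_mk, Ideal.Quotient.eq_zero_iff_mem]
          exact hmem
        rw [this]
        exact Submodule.zero_mem _
    · rw [Submodule.span_le]
      rintro _ ⟨i, rfl⟩
      refine ⟨monomial (i : Fin n →₀ ℕ) 1, ?_, rfl⟩
      exact isHomogeneous_monomial _ ((mem_stdMon.mp i.2).2.2)
  rw [HF, hspan, finrank_span_eq_card hli, Fintype.card_coe]


/-- if `Δ` is a `d`-dimensional simplicial complex (`d ≥ 1`) with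
`f_{d-1} ≥ f_d`, and `J = I_Δ + (x_1^{d+2}, …, x_n^{d+2})`, then with `t = C(d+2,2)`,
`HF_{R/J}(t-1) ≥ HF_{R/J}(t)`. -/
theorem stmt5 (K : Type*) [Field K] (n d : ℕ) (hd : 1 ≤ d)
    (Δ : Finset (Finset (Fin n)))
    (hdown : ∀ σ ∈ Δ, ∀ τ ⊆ σ, τ ∈ Δ)
    (hdim : ∀ σ ∈ Δ, σ.card ≤ d + 1)
    (hface : ∃ σ ∈ Δ, σ.card = d + 1)
    (hf : (Δ.filter fun σ => σ.card = d + 1).card ≤ (Δ.filter fun σ => σ.card = d).card) :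
    HF K (SRIdeal K n Δ ⊔
        Ideal.span (Set.range fun i : Fin n => (X i : MvPolynomial (Fin n) K) ^ (d + 2)))
        ((d + 2).choose 2)
      ≤ HF K (SRIdeal K n Δ ⊔
        Ideal.span (Set.range fun i : Fin n => (X i : MvPolynomial (Fin n) K) ^ (d + 2)))
        ((d + 2).choose 2 - 1) := by
  classical
  set t := (d + 2).choose 2 with htdef
  have hdvd : 2 ∣ (d+2) * (d+1) := by
    have h := Nat.even_mul_succ_self (d+1)
    have h2 : (d+1) * (d+1+1) = (d+2) * (d+1) := by ring
    rw [h2] at h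
    exact h.two_dvd
  have ht2 : 2 * t = (d+2) * (d+1) := by
    rw [htdef, Nat.choose_two_right]
    have h1 : d + 2 - 1 = d + 1 := by omega
    rw [h1]
    exact Nat.mul_div_cancel' hdvd
  have ht1 : 1 ≤ t := by nlinarith
  have h2t : 2 * (t : ℤ) = ((d:ℤ)+1)*((d:ℤ)+2) := by
    have := congrArg (Nat.cast : ℕ → ℤ) ht2
    push_cast at this
    linarith
  rw [J_eq Δ, HF_card K hdown t, HF_card K hdown (t - 1), card_stdMon, card_stdMon]
  have e1 : ∑ σ ∈ Δ, (stdF n d σ t).card = ∑ σ ∈ Δ, Mf d σ.card ((t:ℤ) - σ.card) :=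
    Finset.sum_congr rfl (fun σ _ => card_stdF n d σ t)
  have e2 : ∑ σ ∈ Δ, (stdF n d σ (t-1)).card = ∑ σ ∈ Δ, Mf d σ.card ((t:ℤ) - 1 - σ.card) := by
    refine Finset.sum_congr rfl (fun σ _ => ?_)
    rw [card_stdF n d σ (t-1)]
    congr 1
    omega
  rw [e1, e2]
  exact count_ineq n d t Δ h2t hdim hf
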